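/- Let a > p > 0, C ≥ 0, and let K be a natural number with K + 1 ≥ a. Let (u_k) be a nonnegative real sequence satisfying u_{k+1} ≤ (1 − a/(k+1)) u_k + C (k+1)^{−(1+p)} for all k ≥ K. Then there exists a constant C′ > 0 such that u_k ≤ C′ (k+1)^{−p} for all k ≥ K. -/

import Mathlib

open Real

/-- Bernoulli-type inequality for negative exponents: `1 - p x ≤ (1+x)^{-p}`. -/
lemma bern_neg_aux {x p : ℝ} (hx : 0 ≤ x) (hp : 0 < p) : 1 - p * x ≤ (1 + x) ^ (-p) := by
  have h1x : (0:ℝ) < 1 + x := by linarith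
  have hpow : 0 < (1 + x) ^ p := Real.rpow_pos_of_pos h1x p
  rcases le_or_gt p 1 with hp1 | hp1
  · rcases le_or_gt (1 - p * x) 0 with h | h
    · exact h.trans (Real.rpow_pos_of_pos h1x _).le
    · have hb : (1 + x) ^ p ≤ 1 + p * x :=
        rpow_one_add_le_one_add_mul_self (by linarith) hp.le hp1
      have key : (1 - p * x) * (1 + x) ^ p ≤ 1 := by
        nlinarith [mul_le_mul_of_nonneg_left hb h.le, sq_nonneg (p * x)]
      rw [Real.rpow_neg h1x.le]
      calc 1 - p * x = (1 - p * x) * (1 + x) ^ p * ((1 + x) ^ p)⁻¹ := by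
            field_simp
        _ ≤ 1 * ((1 + x) ^ p)⁻¹ := by
            apply mul_le_mul_of_nonneg_right key (inv_nonneg.mpr hpow.le)
        _ = ((1 + x) ^ p)⁻¹ := one_mul _
  · have hxx : x / (1 + x) ≤ x := by
      rw [div_le_iff₀ h1x]; nlinarith
    have hs : (-1:ℝ) ≤ -(x / (1 + x)) := by
      have : x / (1 + x) ≤ 1 := by rw [div_le_one h1x]; linarith
      linarith
    have hb := one_add_mul_self_le_rpow_one_add hs hp1.le
    have he : (1:ℝ) + -(x / (1 + x)) = (1 + x)⁻¹ := by field_simp; ring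
    rw [he] at hb
    have h2 : ((1 + x)⁻¹) ^ p = (1 + x) ^ (-p) := by
      rw [Real.inv_rpow h1x.le, ← Real.rpow_neg h1x.le]
    calc 1 - p * x ≤ 1 + p * -(x / (1 + x)) := by nlinarith
      _ ≤ ((1 + x)⁻¹) ^ p := hb
      _ = (1 + x) ^ (-p) := h2

/-- A Chung-type stochastic approximation lemma: a nonnegative sequence satisfying
`u_{k+1} ≤ (1 - a/(k+1)) u_k + C (k+1)^{-(1+p)}` for `k ≥ K`, with `a > p > 0` and
`K + 1 ≥ a`, decays at the polynomial rate `u_k = O((k+1)^{-p})`. -/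
theorem chung_lemma
    (a p C : ℝ) (hp : 0 < p) (hap : p < a) (hC : 0 ≤ C)
    (K : ℕ) (hK : a ≤ (K : ℝ) + 1)
    (u : ℕ → ℝ) (hu : ∀ k, 0 ≤ u k)
    (hrec : ∀ k, K ≤ k →
      u (k + 1) ≤ (1 - a / ((k : ℝ) + 1)) * u k + C * ((k : ℝ) + 1) ^ (-(1 + p))) :
    ∃ C' > 0, ∀ k, K ≤ k → u k ≤ C' * ((k : ℝ) + 1) ^ (-p) := by
  set C' : ℝ := max (C / (a - p)) (u K * ((K : ℝ) + 1) ^ p) + 1 with hC'def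
  have hap' : 0 < a - p := by linarith
  have hC'1 : C / (a - p) ≤ C' - 1 := by simp [hC'def]
  have hC'2 : u K * ((K : ℝ) + 1) ^ p ≤ C' - 1 := by simp [hC'def]
  clear_value C'
  have hC'pos : 0 < C' := by
    have h1 : 0 ≤ C / (a - p) := div_nonneg hC hap'.le
    linarith
  refine ⟨C', hC'pos, ?_⟩
  intro k hk
  induction k, hk using Nat.le_induction with
  | base =>
      have hKpos : (0:ℝ) < (K : ℝ) + 1 := by positivity
      have hppos : 0 < ((K : ℝ) + 1) ^ p := Real.rpow_pos_of_pos hKpos p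
      have hneg : ((K : ℝ) + 1) ^ (-p) = (((K : ℝ) + 1) ^ p)⁻¹ := Real.rpow_neg hKpos.le p
      rw [hneg]
      calc u K = u K * ((K : ℝ) + 1) ^ p * (((K : ℝ) + 1) ^ p)⁻¹ := by field_simp
        _ ≤ C' * (((K : ℝ) + 1) ^ p)⁻¹ :=
            mul_le_mul_of_nonneg_right (by linarith) (inv_nonneg.mpr hppos.le)
  | succ k hk ih =>
      set t : ℝ := (k : ℝ) + 1 with htdef
      have ht1 : (1:ℝ) ≤ t := by
        have : (0:ℝ) ≤ (k : ℝ) := Nat.cast_nonneg k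
        simp only [htdef]; linarith
      have htpos : (0:ℝ) < t := by linarith
      have hta : a ≤ t := by
        have : (K : ℝ) ≤ (k : ℝ) := Nat.cast_le.mpr hk
        simp only [htdef]; linarith
      have hcoef : 0 ≤ 1 - a / t := by
        rw [sub_nonneg, div_le_one htpos]; exact hta
      have hcast : ((k + 1 : ℕ) : ℝ) + 1 = t + 1 := by push_cast [htdef]; ring
      have htp : 0 < t ^ (-p) := Real.rpow_pos_of_pos htpos _
      -- Bernoulli step : (t+1)^{-p} ≥ t^{-p} (1 - p/t)
      have hbern : 1 - p * (1 / t) ≤ (1 + 1 / t) ^ (-p) :=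
        bern_neg_aux (by positivity) hp
      have hfact : (t + 1) ^ (-p) = t ^ (-p) * (1 + 1 / t) ^ (-p) := by
        have h1 : t + 1 = t * (1 + 1 / t) := by field_simp
        rw [h1, Real.mul_rpow htpos.le (by positivity)]
      have hkey : t ^ (-p) * (1 - p / t) ≤ (t + 1) ^ (-p) := by
        rw [hfact]
        have : 1 - p / t ≤ (1 + 1 / t) ^ (-p) := by
          have : p / t = p * (1 / t) := by ring
          rw [this]; exact hbern
        exact mul_le_mul_of_nonneg_left this htp.le
      -- the recursion bound
      have hrk := hrec k hk
      have hsplit : t ^ (-(1 + p)) = t⁻¹ * t ^ (-p) := by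
        rw [show -(1 + p) = (-1) + (-p) by ring, Real.rpow_add htpos, Real.rpow_neg_one]
      have hstep : (1 - a / t) * (C' * t ^ (-p)) + C * t ^ (-(1 + p))
          ≤ C' * (t ^ (-p) * (1 - p / t)) := by
        rw [hsplit]
        have hCle : C ≤ C' * (a - p) := by
          have := hC'1
          rw [div_le_iff₀ hap'] at this
          nlinarith
        have h2 : (1 - a / t) * C' + C * t⁻¹ ≤ C' * (1 - p / t) := by
          have ht' : 0 < t⁻¹ := inv_pos.mpr htpos
          have : C * t⁻¹ ≤ C' * (a - p) * t⁻¹ :=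
            mul_le_mul_of_nonneg_right hCle ht'.le
          have hdiv : a / t = a * t⁻¹ := by rw [div_eq_mul_inv]
          have hdiv' : p / t = p * t⁻¹ := by rw [div_eq_mul_inv]
          rw [hdiv, hdiv']
          nlinarith
        calc (1 - a / t) * (C' * t ^ (-p)) + C * (t⁻¹ * t ^ (-p))
            = ((1 - a / t) * C' + C * t⁻¹) * t ^ (-p) := by ring
          _ ≤ (C' * (1 - p / t)) * t ^ (-p) :=
              mul_le_mul_of_nonneg_right h2 htp.le
          _ = C' * (t ^ (-p) * (1 - p / t)) := by ring
      calc u (k + 1) ≤ (1 - a / t) * u k + C * t ^ (-(1 + p)) := hrk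
        _ ≤ (1 - a / t) * (C' * t ^ (-p)) + C * t ^ (-(1 + p)) := by
            have := mul_le_mul_of_nonneg_left ih hcoef
            linarith
        _ ≤ C' * (t ^ (-p) * (1 - p / t)) := hstep
        _ ≤ C' * (t + 1) ^ (-p) := by
            apply mul_le_mul_of_nonneg_left hkey hC'pos.le
        _ = C' * (((k + 1 : ℕ) : ℝ) + 1) ^ (-p) := by rw [hcast]
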